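/- For every integer n ≥ 2, the family of n×n matrices {(1/(2ab)) · NESW(a×b) : a,b ≥ 1, a+b ≤ n} is affinely independent, and the hollow symmetric Monge polytope HM_n equals the convex hull of this family; consequently HM_n is a simplex with n(n−1)/2 vertices. -/

import Mathlib

open Finset

/-- The Monge property for an `n × n` real matrix (indices are 0-based). -/
def IsMonge {n : ℕ} (C : Matrix (Fin n) (Fin n) ℝ) : Prop :=
  ∀ i I j J : Fin n, i < I → j < J → C i j + C I J ≤ C i J + C I j

/-- The hollow symmetric Monge polytope: symmetric matrices with zero diagonal,
nonnegative entries summing to 1, and the Monge property. -/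
def HM (n : ℕ) : Set (Matrix (Fin n) (Fin n) ℝ) :=
  {C | C.IsSymm ∧ (∀ i, C i i = 0) ∧ (∀ i j, 0 ≤ C i j) ∧
    (∑ i, ∑ j, C i j) = 1 ∧ IsMonge C}

/-- `NESW n a b` is the `n × n` 0/1 matrix whose (1-based) `(k, l)` entry is 1 iff
`(k ≤ a ∧ l > n - b) ∨ (k > n - b ∧ l ≤ a)`. -/
def NESW (n a b : ℕ) : Matrix (Fin n) (Fin n) ℝ :=
  Matrix.of fun k l =>
    if (k.val + 1 ≤ a ∧ n - b < l.val + 1) ∨ (n - b < k.val + 1 ∧ l.val + 1 ≤ a) then 1 else 0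

/-- The index set of pairs `(a, b)` with `a, b ≥ 1` and `a + b ≤ n`. -/
def idx (n : ℕ) : Finset (ℕ × ℕ) :=
  (Finset.range (n + 1) ×ˢ Finset.range (n + 1)).filter
    fun ab => 1 ≤ ab.1 ∧ 1 ≤ ab.2 ∧ ab.1 + ab.2 ≤ n

/-- The candidate vertices of the hollow symmetric Monge polytope. -/
noncomputable def hmVertex (n : ℕ) (ab : {ab : ℕ × ℕ // ab ∈ idx n}) :
    Matrix (Fin n) (Fin n) ℝ :=
  (1 / (2 * (ab.val.1 : ℝ) * (ab.val.2 : ℝ))) • NESW n ab.val.1 ab.val.2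

/-! Auxiliary -/

lemma mem_idx {n a b : ℕ} : (a, b) ∈ idx n ↔ 1 ≤ a ∧ 1 ≤ b ∧ a + b ≤ n := by
  simp only [idx, mem_filter, mem_product, mem_range]
  omega

noncomputable def uvec (n a : ℕ) (k : Fin n) : ℝ := if k.val < a then 1 else 0
noncomputable def vvec (n b : ℕ) (k : Fin n) : ℝ := if n - b ≤ k.val then 1 else 0

lemma NESW_eq {n a b : ℕ} (hab : a + b ≤ n) (k l : Fin n) :
    NESW n a b k l = uvec n a k * vvec n b l + vvec n b k * uvec n a l := by
  simp only [NESW, Matrix.of_apply, uvec, vvec]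
  have hk := k.isLt
  have hl := l.isLt
  split_ifs <;> (try push_neg at *) <;> first | (exfalso; omega) | norm_num

lemma uvec_nonneg {n a : ℕ} (k : Fin n) : 0 ≤ uvec n a k := by
  unfold uvec; split <;> norm_num

lemma vvec_nonneg {n b : ℕ} (k : Fin n) : 0 ≤ vvec n b k := by
  unfold vvec; split <;> norm_num

lemma uvec_anti {n a : ℕ} {k l : Fin n} (h : k ≤ l) : uvec n a l ≤ uvec n a k := by
  have hh : (k:ℕ) ≤ l := h
  unfold uvec; split_ifs <;> first | (exfalso; omega) | norm_num

lemma vvec_mono {n b : ℕ} {k l : Fin n} (h : k ≤ l) : vvec n b k ≤ vvec n b l := by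
  have hh : (k:ℕ) ≤ l := h
  unfold vvec; split_ifs <;> first | (exfalso; omega) | norm_num

lemma sum_uvec {n a : ℕ} (ha : a ≤ n) : ∑ k : Fin n, uvec n a k = a := by
  simp only [uvec]
  rw [Fin.sum_univ_eq_sum_range (fun k => if k < a then (1:ℝ) else 0) n, Finset.sum_boole]
  have : (Finset.range n).filter (fun k => k < a) = Finset.range a := by
    ext k; simp only [mem_filter, mem_range]; omega
  rw [this, Finset.card_range]

lemma sum_vvec {n b : ℕ} (hb : b ≤ n) : ∑ k : Fin n, vvec n b k = b := by
  simp only [vvec]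
  rw [Fin.sum_univ_eq_sum_range (fun k => if n - b ≤ k then (1:ℝ) else 0) n, Finset.sum_boole]
  have : (Finset.range n).filter (fun k => n - b ≤ k) = Finset.Ico (n-b) n := by
    ext k; simp only [mem_filter, mem_range, mem_Ico]; omega
  rw [this, Nat.card_Ico]
  congr 1; omega

lemma NESW_sum {n a b : ℕ} (ha : 1 ≤ a) (hb : 1 ≤ b) (hab : a + b ≤ n) :
    ∑ i : Fin n, ∑ j : Fin n, NESW n a b i j = 2 * a * b := by
  have h1 : ∀ i j : Fin n, NESW n a b i j = uvec n a i * vvec n b j + vvec n b i * uvec n a j :=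
    fun i j => NESW_eq hab i j
  calc ∑ i : Fin n, ∑ j : Fin n, NESW n a b i j
      = ∑ i : Fin n, ∑ j : Fin n, (uvec n a i * vvec n b j + vvec n b i * uvec n a j) := by
        exact Finset.sum_congr rfl fun i _ => Finset.sum_congr rfl fun j _ => h1 i j
    _ = ∑ i : Fin n, (uvec n a i * (∑ j : Fin n, vvec n b j) + vvec n b i * (∑ j : Fin n, uvec n a j)) := by
        exact Finset.sum_congr rfl fun i _ => by rw [Finset.sum_add_distrib, ← Finset.mul_sum, ← Finset.mul_sum]
    _ = (∑ i : Fin n, uvec n a i) * (∑ j : Fin n, vvec n b j)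
        + (∑ i : Fin n, vvec n b i) * (∑ j : Fin n, uvec n a j) := by
        rw [Finset.sum_add_distrib, ← Finset.sum_mul, ← Finset.sum_mul]
    _ = 2 * a * b := by rw [sum_uvec (by omega), sum_vvec (by omega)]; ring

lemma hmVertex_mem_HM {n : ℕ} (ab : {ab : ℕ × ℕ // ab ∈ idx n}) :
    hmVertex n ab ∈ HM n := by
  obtain ⟨⟨a, b⟩, hab⟩ := ab
  obtain ⟨ha, hb, hsum⟩ := mem_idx.mp hab
  have hc : (0:ℝ) < 2 * a * b := by positivity
  have hent : ∀ i j : Fin n, NESW n a b i j = uvec n a i * vvec n b j + vvec n b i * uvec n a j :=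
    fun i j => NESW_eq hsum i j
  refine ⟨?_, ?_, ?_, ?_, ?_⟩
  · -- symmetric
    ext i j
    simp only [hmVertex, Matrix.transpose_apply, Matrix.smul_apply, smul_eq_mul, hent]
    ring
  · -- hollow
    intro i
    have huv : uvec n a i * vvec n b i = 0 := by
      unfold uvec vvec
      split_ifs <;> first | (exfalso; omega) | norm_num
    simp only [hmVertex, Matrix.smul_apply, smul_eq_mul, hent]
    rw [huv, mul_comm (vvec n b i) (uvec n a i), huv]; ring
  · -- nonneg
    intro i j
    simp only [hmVertex, Matrix.smul_apply, smul_eq_mul, hent]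
    have := uvec_nonneg (n := n) (a := a) i
    have := uvec_nonneg (n := n) (a := a) j
    have := vvec_nonneg (n := n) (b := b) i
    have := vvec_nonneg (n := n) (b := b) j
    positivity
  · -- sum
    simp only [hmVertex, Matrix.smul_apply, smul_eq_mul, ← Finset.mul_sum]
    rw [NESW_sum ha hb hsum]
    field_simp
  · -- Monge
    intro i I j J hiI hjJ
    simp only [hmVertex, Matrix.smul_apply, smul_eq_mul, hent]
    have h1 : uvec n a I ≤ uvec n a i := uvec_anti (le_of_lt hiI)
    have h2 : vvec n b j ≤ vvec n b J := vvec_mono (le_of_lt hjJ)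
    have h3 : vvec n b i ≤ vvec n b I := vvec_mono (le_of_lt hiI)
    have h4 : uvec n a J ≤ uvec n a j := uvec_anti (le_of_lt hjJ)
    have key : (uvec n a i - uvec n a I) * (vvec n b J - vvec n b j)
        + (vvec n b I - vvec n b i) * (uvec n a j - uvec n a J) ≥ 0 := by
      have := mul_nonneg (sub_nonneg.mpr h1) (sub_nonneg.mpr h2)
      have := mul_nonneg (sub_nonneg.mpr h3) (sub_nonneg.mpr h4)
      linarith
    have hc' : (0:ℝ) ≤ 1 / (2 * a * b) := by positivity
    have expand : (uvec n a i * vvec n b J + vvec n b i * uvec n a J)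
        + (uvec n a I * vvec n b j + vvec n b I * uvec n a j)
        - (uvec n a i * vvec n b j + vvec n b i * uvec n a j)
        - (uvec n a I * vvec n b J + vvec n b I * uvec n a J)
        = (uvec n a i - uvec n a I) * (vvec n b J - vvec n b j)
        + (vvec n b I - vvec n b i) * (uvec n a j - uvec n a J) := by ring
    nlinarith [key, hc']

lemma convex_HM (n : ℕ) : Convex ℝ (HM n) := by
  intro C hC D hD s t hs ht hst
  obtain ⟨hCs, hCd, hCn, hC1, hCm⟩ := hC
  obtain ⟨hDs, hDd, hDn, hD1, hDm⟩ := hD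
  refine ⟨?_, ?_, ?_, ?_, ?_⟩
  · unfold Matrix.IsSymm at *
    rw [Matrix.transpose_add, Matrix.transpose_smul, Matrix.transpose_smul, hCs, hDs]
  · intro i
    simp [Matrix.add_apply, Matrix.smul_apply, hCd i, hDd i]
  · intro i j
    simp only [Matrix.add_apply, Matrix.smul_apply, smul_eq_mul]
    have := hCn i j; have := hDn i j
    positivity
  · simp only [Matrix.add_apply, Matrix.smul_apply, smul_eq_mul, Finset.sum_add_distrib,
      ← Finset.mul_sum]
    rw [hC1, hD1]; linarith
  · intro i I j J hiI hjJ
    have h1 := hCm i I j J hiI hjJ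
    have h2 := hDm i I j J hiI hjJ
    simp only [Matrix.add_apply, Matrix.smul_apply, smul_eq_mul]
    nlinarith [mul_le_mul_of_nonneg_left h1 hs, mul_le_mul_of_nonneg_left h2 ht]

/-- Entry of a matrix at natural-number positions, 0 outside. -/
noncomputable def ent {n : ℕ} (C : Matrix (Fin n) (Fin n) ℝ) (i j : ℕ) : ℝ :=
  if h : i < n ∧ j < n then C ⟨i, h.1⟩ ⟨j, h.2⟩ else 0

lemma ent_eq {n : ℕ} (C : Matrix (Fin n) (Fin n) ℝ) {i j : ℕ} (hi : i < n) (hj : j < n) :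
    ent C i j = C ⟨i, hi⟩ ⟨j, hj⟩ := by
  simp [ent, hi, hj]

/-- The coefficient functional. -/
noncomputable def psi {n : ℕ} (C : Matrix (Fin n) (Fin n) ℝ) (a b : ℕ) : ℝ :=
  if a + b = n then ent C (a-1) (n-b)
  else ent C (a-1) (n-b) - ent C a (n-b) - ent C (a-1) (n-b-1) + ent C a (n-b-1)

lemma ent_add {n : ℕ} (C D : Matrix (Fin n) (Fin n) ℝ) (i j : ℕ) :
    ent (C + D) i j = ent C i j + ent D i j := by
  unfold ent; split <;> simp [Matrix.add_apply]

lemma ent_smul {n : ℕ} (c : ℝ) (C : Matrix (Fin n) (Fin n) ℝ) (i j : ℕ) :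
    ent (c • C) i j = c * ent C i j := by
  unfold ent; split <;> simp [Matrix.smul_apply]

noncomputable def psiL (n a b : ℕ) : Matrix (Fin n) (Fin n) ℝ →ₗ[ℝ] ℝ where
  toFun C := psi C a b
  map_add' C D := by unfold psi; split <;> simp [ent_add] <;> ring
  map_smul' c C := by unfold psi; split <;> simp [ent_smul] <;> ring

/-- Evaluation of psi on the 0/1 matrices NESW. -/
lemma psi_NESW {n : ℕ} {a b a' b' : ℕ} (h : (a,b) ∈ idx n) (h' : (a',b') ∈ idx n) :
    psi (NESW n a' b') a b = if (a, b) = (a', b') then 1 else 0 := by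
  obtain ⟨ha, hb, hab⟩ := mem_idx.mp h
  obtain ⟨ha', hb', hab'⟩ := mem_idx.mp h'
  have e1 : ∀ i j : ℕ, i < n → j < n →
      ent (NESW n a' b') i j = (if (i + 1 ≤ a' ∧ n - b' < j + 1) ∨ (n - b' < i + 1 ∧ j + 1 ≤ a')
        then (1:ℝ) else 0) := by
    intro i j hi hj
    rw [ent_eq _ hi hj]
    simp [NESW]
  have hPne : ((a,b) = (a',b')) ↔ (a = a' ∧ b = b') := by
    constructor
    · intro hh; exact ⟨congrArg Prod.fst hh, congrArg Prod.snd hh⟩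
    · rintro ⟨rfl, rfl⟩; rfl
  by_cases hcase : a + b = n
  · rw [psi, if_pos hcase, e1 _ _ (by omega) (by omega)]
    simp only [hPne]
    split_ifs <;> first | rfl | (exfalso; omega)
  · rw [psi, if_neg hcase, e1 _ _ (by omega) (by omega), e1 _ _ (by omega) (by omega),
      e1 _ _ (by omega) (by omega), e1 _ _ (by omega) (by omega)]
    simp only [hPne]
    split_ifs <;> first | (exfalso; omega) | norm_num

lemma sum_Icc_telescope {f g : ℕ → ℝ} {A M : ℕ} (hAM : A ≤ M)
    (h1 : ∀ x, A ≤ x → x < M → g x = f x - f (x+1)) (h2 : g M = f M) :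
    ∑ x ∈ Icc A M, g x = f A := by
  rw [← Finset.Ico_add_one_right_eq_Icc, Finset.sum_Ico_succ_top hAM, Finset.sum_Ico_eq_sum_range]
  have hc : ∀ i ∈ range (M - A), g (A + i) = (fun i => f (A + i)) i - (fun i => f (A + i)) (i+1) := by
    intro i hi
    simp only [mem_range] at hi
    have := h1 (A + i) (by omega) (by omega)
    simpa [add_assoc] using this
  rw [Finset.sum_congr rfl hc, Finset.sum_range_sub' (fun i => f (A+i)), h2]
  have hAM' : A + (M - A) = M := by omega
  simp only [Nat.add_zero, hAM']
  ring

lemma psi_nonneg {n : ℕ} {C : Matrix (Fin n) (Fin n) ℝ} (hC : C ∈ HM n)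
    {a b : ℕ} (h : (a, b) ∈ idx n) : 0 ≤ psi C a b := by
  obtain ⟨ha, hb, hab⟩ := mem_idx.mp h
  obtain ⟨hCs, hCd, hCn, hC1, hCm⟩ := hC
  by_cases hcase : a + b = n
  · rw [psi, if_pos hcase, ent_eq C (by omega) (by omega)]
    exact hCn _ _
  · rw [psi, if_neg hcase, ent_eq C (show a - 1 < n by omega) (show n - b < n by omega),
      ent_eq C (show a < n by omega) (show n - b < n by omega),
      ent_eq C (show a - 1 < n by omega) (show n - b - 1 < n by omega),
      ent_eq C (show a < n by omega) (show n - b - 1 < n by omega)]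
    have hm := hCm ⟨a - 1, by omega⟩ ⟨a, by omega⟩ ⟨n - b - 1, by omega⟩ ⟨n - b, by omega⟩
      (by simp [Fin.lt_def]; omega) (by simp [Fin.lt_def]; omega)
    linarith

lemma psi_inner_sum {n : ℕ} {C : Matrix (Fin n) (Fin n) ℝ} (hd : ∀ i : Fin n, C i i = 0)
    {a B : ℕ} (ha : 1 ≤ a) (hB : 1 ≤ B) (haB : a + B ≤ n) :
    ∑ b ∈ Icc B (n - a), psi C a b = ent C (a-1) (n-B) - ent C a (n-B) := by
  have := sum_Icc_telescope (f := fun b => ent C (a-1) (n-b) - ent C a (n-b))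
    (g := fun b => psi C a b) (A := B) (M := n - a) (by omega)
    (by
      intro b hBb hbM
      have hne : a + b ≠ n := by omega
      have hsub : n - (b+1) = n - b - 1 := by omega
      simp only [psi, if_neg hne, hsub]
      ring)
    (by
      have h1 : a + (n - a) = n := by omega
      have h2 : n - (n - a) = a := by omega
      have h3 : a < n := by omega
      simp only [psi, if_pos h1, h2]
      rw [ent_eq C (show a < n by omega) (show a < n by omega)]
      rw [hd ⟨a, h3⟩]
      ring)
  exact this

lemma quad_sum {n : ℕ} {C : Matrix (Fin n) (Fin n) ℝ} (hd : ∀ i : Fin n, C i i = 0)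
    {A B : ℕ} (hA : 1 ≤ A) (hB : 1 ≤ B) (hAB : A + B ≤ n) :
    ∑ a ∈ Icc A (n - B), ∑ b ∈ Icc B (n - a), psi C a b = ent C (A-1) (n-B) := by
  have hstep : ∀ a, A ≤ a → a < n - B →
      ∑ b ∈ Icc B (n - a), psi C a b
        = (fun a => ent C (a-1) (n-B)) a - (fun a => ent C (a-1) (n-B)) (a+1) := by
    intro a hAa haM
    rw [psi_inner_sum hd (by omega) hB (by omega)]
    simp only [Nat.add_sub_cancel]
  have hlast : ∑ b ∈ Icc B (n - (n-B)), psi C (n-B) b = ent C (n-B-1) (n-B) := by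
    rw [psi_inner_sum hd (by omega) hB (by omega)]
    rw [ent_eq C (show n - B < n by omega) (show n - B < n by omega), hd ⟨n-B, by omega⟩]
    ring
  exact sum_Icc_telescope (by omega) hstep hlast

lemma reconstruct_entry {n : ℕ} {C : Matrix (Fin n) (Fin n) ℝ} (hC : C ∈ HM n) (i j : Fin n) :
    ∑ ab ∈ idx n, psi C ab.1 ab.2 * NESW n ab.1 ab.2 i j = C i j := by
  obtain ⟨hCs, hCd, hCn, hC1, hCm⟩ := hC
  -- reduce to a filtered sum
  have key : ∀ i j : Fin n, (i:ℕ) < (j:ℕ) →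
      ∑ ab ∈ idx n, psi C ab.1 ab.2 * NESW n ab.1 ab.2 i j = C i j := by
    intro i j hij
    have hjn := j.isLt
    set A : ℕ := (i:ℕ) + 1 with hA
    set B : ℕ := n - (j:ℕ) with hB
    have hA1 : 1 ≤ A := by omega
    have hB1 : 1 ≤ B := by omega
    have hABn : A + B ≤ n := by omega
    have hfilter : ∑ ab ∈ idx n, psi C ab.1 ab.2 * NESW n ab.1 ab.2 i j
        = ∑ ab ∈ (((Icc A (n - B)) ×ˢ (Icc B n)).filter fun p => p.1 + p.2 ≤ n),
            psi C ab.1 ab.2 := by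
      rw [← Finset.sum_filter_add_sum_filter_not (idx n)
        (fun ab => (A ≤ ab.1 ∧ B ≤ ab.2))]
      have hz : ∑ ab ∈ (idx n).filter (fun ab => ¬(A ≤ ab.1 ∧ B ≤ ab.2)),
          psi C ab.1 ab.2 * NESW n ab.1 ab.2 i j = 0 := by
        apply Finset.sum_eq_zero
        intro ab hab
        simp only [mem_filter] at hab
        obtain ⟨habm, habc⟩ := hab
        obtain ⟨h1, h2, h3⟩ := mem_idx.mp (show (ab.1, ab.2) ∈ idx n from habm)
        have : NESW n ab.1 ab.2 i j = 0 := by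
          simp only [NESW, Matrix.of_apply, ite_eq_right_iff]
          intro hcond
          exfalso
          omega
        rw [this, mul_zero]
      rw [hz, add_zero]
      have hone : ∀ ab ∈ (idx n).filter (fun ab => (A ≤ ab.1 ∧ B ≤ ab.2)),
          psi C ab.1 ab.2 * NESW n ab.1 ab.2 i j = psi C ab.1 ab.2 := by
        intro ab hab
        simp only [mem_filter] at hab
        obtain ⟨habm, habc⟩ := hab
        obtain ⟨h1, h2, h3⟩ := mem_idx.mp (show (ab.1, ab.2) ∈ idx n from habm)
        have : NESW n ab.1 ab.2 i j = 1 := by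
          simp only [NESW, Matrix.of_apply, ite_eq_left_iff]
          intro hcond
          exfalso
          push_neg at hcond
          omega
        rw [this, mul_one]
      rw [Finset.sum_congr rfl hone]
      apply Finset.sum_congr _ (fun _ _ => rfl)
      ext ⟨a, b⟩
      simp only [mem_filter, mem_product, mem_Icc, mem_idx]
      constructor
      · rintro ⟨⟨h1, h2, h3⟩, h4, h5⟩
        refine ⟨⟨⟨h4, by omega⟩, ⟨h5, by omega⟩⟩, h3⟩
      · rintro ⟨⟨⟨h4, h4'⟩, h5, h5'⟩, h3⟩
        exact ⟨⟨by omega, by omega, h3⟩, h4, h5⟩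
    rw [hfilter, Finset.sum_filter, Finset.sum_product]
    have hinner : ∀ a ∈ Icc A (n - B),
        (∑ b ∈ Icc B n, if a + b ≤ n then psi C a b else 0)
          = ∑ b ∈ Icc B (n - a), psi C a b := by
      intro a haa
      simp only [mem_Icc] at haa
      rw [← Finset.sum_filter]
      apply Finset.sum_congr _ (fun _ _ => rfl)
      ext b
      simp only [mem_filter, mem_Icc]
      omega
    rw [Finset.sum_congr rfl hinner, quad_sum hCd hA1 hB1 hABn]
    rw [ent_eq C (show A - 1 < n by omega) (show n - B < n by omega)]
    congr 1
    exact Fin.ext (show n - B = (j:ℕ) by omega)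
  rcases lt_trichotomy ((i:ℕ)) ((j:ℕ)) with h | h | h
  · exact key i j h
  · -- diagonal
    have hij : i = j := Fin.ext h
    subst hij
    rw [hCd i]
    apply Finset.sum_eq_zero
    intro ab hab
    obtain ⟨h1, h2, h3⟩ := mem_idx.mp (show (ab.1, ab.2) ∈ idx n from hab)
    have : NESW n ab.1 ab.2 i i = 0 := by
      simp only [NESW, Matrix.of_apply, ite_eq_right_iff]
      intro hcond
      exfalso
      omega
    rw [this, mul_zero]
  · -- lower triangle, use symmetry
    have hsymmN : ∀ a b : ℕ, NESW n a b i j = NESW n a b j i := by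
      intro a b
      simp only [NESW, Matrix.of_apply]
      congr 1
      simp only [eq_iff_iff]
      tauto
    have hsymmC : C i j = C j i := by
      have := congrFun (congrFun hCs j) i
      simpa [Matrix.transpose_apply] using this
    calc ∑ ab ∈ idx n, psi C ab.1 ab.2 * NESW n ab.1 ab.2 i j
        = ∑ ab ∈ idx n, psi C ab.1 ab.2 * NESW n ab.1 ab.2 j i := by
          exact Finset.sum_congr rfl fun ab _ => by rw [hsymmN]
      _ = C j i := key j i h
      _ = C i j := hsymmC.symm

noncomputable def wt {n : ℕ} (C : Matrix (Fin n) (Fin n) ℝ)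
    (ab : {ab : ℕ × ℕ // ab ∈ idx n}) : ℝ :=
  2 * (ab.1.1 : ℝ) * (ab.1.2 : ℝ) * psi C ab.1.1 ab.1.2

lemma wt_nonneg {n : ℕ} {C : Matrix (Fin n) (Fin n) ℝ} (hC : C ∈ HM n)
    (ab : {ab : ℕ × ℕ // ab ∈ idx n}) : 0 ≤ wt C ab := by
  have hmem : (ab.1.1, ab.1.2) ∈ idx n := by rw [Prod.mk.eta]; exact ab.2
  have := psi_nonneg hC hmem
  unfold wt
  positivity

lemma wt_smul_entry {n : ℕ} (C : Matrix (Fin n) (Fin n) ℝ)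
    (ab : {ab : ℕ × ℕ // ab ∈ idx n}) (i j : Fin n) :
    wt C ab • hmVertex n ab i j = psi C ab.1.1 ab.1.2 * NESW n ab.1.1 ab.1.2 i j := by
  have hmem : (ab.1.1, ab.1.2) ∈ idx n := by rw [Prod.mk.eta]; exact ab.2
  obtain ⟨ha, hb, -⟩ := mem_idx.mp hmem
  have ha' : (0:ℝ) < (ab.1.1 : ℝ) := by exact_mod_cast Nat.lt_of_lt_of_le Nat.zero_lt_one ha
  have hb' : (0:ℝ) < (ab.1.2 : ℝ) := by exact_mod_cast Nat.lt_of_lt_of_le Nat.zero_lt_one hb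
  simp only [wt, hmVertex, Matrix.smul_apply, smul_eq_mul]
  field_simp

lemma reconstruct {n : ℕ} {C : Matrix (Fin n) (Fin n) ℝ} (hC : C ∈ HM n) :
    ∑ ab : {ab : ℕ × ℕ // ab ∈ idx n}, wt C ab • hmVertex n ab = C := by
  ext i j
  rw [Matrix.sum_apply]
  have h1 : ∀ ab : {ab : ℕ × ℕ // ab ∈ idx n},
      (wt C ab • hmVertex n ab) i j = psi C ab.1.1 ab.1.2 * NESW n ab.1.1 ab.1.2 i j := by
    intro ab
    rw [Matrix.smul_apply, smul_eq_mul, ← smul_eq_mul, wt_smul_entry]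
  rw [Finset.sum_congr rfl (fun ab _ => h1 ab)]
  exact (Finset.sum_coe_sort (idx n)
    (fun ab => psi C ab.1 ab.2 * NESW n ab.1 ab.2 i j)).trans (reconstruct_entry hC i j)

lemma wt_sum {n : ℕ} {C : Matrix (Fin n) (Fin n) ℝ} (hC : C ∈ HM n) :
    ∑ ab : {ab : ℕ × ℕ // ab ∈ idx n}, wt C ab = 1 := by
  have hC1 := hC.2.2.2.1
  have hrec := reconstruct hC
  have hv1 : ∀ ab : {ab : ℕ × ℕ // ab ∈ idx n},
      ∑ i : Fin n, ∑ j : Fin n, hmVertex n ab i j = 1 := fun ab =>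
    (hmVertex_mem_HM ab).2.2.2.1
  calc ∑ ab : {ab : ℕ × ℕ // ab ∈ idx n}, wt C ab
      = ∑ ab : {ab : ℕ × ℕ // ab ∈ idx n},
          wt C ab * (∑ i : Fin n, ∑ j : Fin n, hmVertex n ab i j) := by
        exact Finset.sum_congr rfl fun ab _ => by rw [hv1 ab, mul_one]
    _ = ∑ ab : {ab : ℕ × ℕ // ab ∈ idx n},
          ∑ i : Fin n, ∑ j : Fin n, wt C ab * hmVertex n ab i j := by
        exact Finset.sum_congr rfl fun ab _ => by
          rw [Finset.mul_sum]
          exact Finset.sum_congr rfl fun i _ => by rw [Finset.mul_sum]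
    _ = ∑ i : Fin n, ∑ j : Fin n,
          ∑ ab : {ab : ℕ × ℕ // ab ∈ idx n}, wt C ab * hmVertex n ab i j := by
        rw [Finset.sum_comm]
        exact Finset.sum_congr rfl fun i _ => Finset.sum_comm
    _ = ∑ i : Fin n, ∑ j : Fin n, C i j := by
        refine Finset.sum_congr rfl fun i _ => Finset.sum_congr rfl fun j _ => ?_
        have := congrFun (congrFun hrec i) j
        rw [Matrix.sum_apply] at this
        simpa [Matrix.smul_apply, smul_eq_mul] using this
    _ = 1 := hC1

lemma psi_vertex {n : ℕ} (ab ab' : {ab : ℕ × ℕ // ab ∈ idx n}) :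
    psi (hmVertex n ab') ab.1.1 ab.1.2
      = if ab' = ab then 1 / (2 * (ab.1.1:ℝ) * (ab.1.2:ℝ)) else 0 := by
  have hmem : (ab.1.1, ab.1.2) ∈ idx n := by rw [Prod.mk.eta]; exact ab.2
  have hmem' : (ab'.1.1, ab'.1.2) ∈ idx n := by rw [Prod.mk.eta]; exact ab'.2
  have hV : hmVertex n ab' = (1 / (2 * (ab'.1.1 : ℝ) * (ab'.1.2 : ℝ))) •
      NESW n ab'.1.1 ab'.1.2 := rfl
  have hpsi : psi (hmVertex n ab') ab.1.1 ab.1.2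
      = (1 / (2 * (ab'.1.1 : ℝ) * (ab'.1.2 : ℝ))) * psi (NESW n ab'.1.1 ab'.1.2) ab.1.1 ab.1.2 := by
    rw [hV]
    unfold psi
    split <;> simp [ent_smul] <;> ring
  rw [hpsi, psi_NESW hmem hmem']
  have heq : ((ab.1.1, ab.1.2) = (ab'.1.1, ab'.1.2)) ↔ (ab' = ab) := by
    rw [Prod.mk.eta, Prod.mk.eta]
    constructor
    · intro h; exact Subtype.ext h.symm
    · intro h; rw [h]
  split_ifs with h1 h2 h2
  · rw [heq] at h1; subst h1; norm_num
  · rw [heq] at h1; exact absurd h1 h2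
  · rw [← heq] at h2; exact absurd h2 h1
  · norm_num

lemma hmVertex_affineIndependent (n : ℕ) : AffineIndependent ℝ (hmVertex n) := by
  rw [affineIndependent_iff]
  intro s w hw0 hzero e hes
  have hmem : (e.1.1, e.1.2) ∈ idx n := by rw [Prod.mk.eta]; exact e.2
  obtain ⟨ha, hb, -⟩ := mem_idx.mp hmem
  have happ := congrArg (psiL n e.1.1 e.1.2) hzero
  rw [map_sum, map_zero] at happ
  have hterm : ∀ ab ∈ s, psiL n e.1.1 e.1.2 (w ab • hmVertex n ab)
      = w ab * (if ab = e then 1 / (2 * (e.1.1:ℝ) * (e.1.2:ℝ)) else 0) := by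
    intro ab _
    rw [map_smul, smul_eq_mul]
    congr 1
    exact psi_vertex e ab
  rw [Finset.sum_congr rfl hterm] at happ
  simp only [mul_ite, mul_zero] at happ
  rw [Finset.sum_ite_eq' s e (fun ab => w ab * (1 / (2 * (e.1.1:ℝ) * (e.1.2:ℝ)))), if_pos hes]
    at happ
  have hc : (1 / (2 * (e.1.1:ℝ) * (e.1.2:ℝ))) ≠ 0 := by
    have ha' : (0:ℝ) < (e.1.1 : ℝ) := by exact_mod_cast ha
    have hb' : (0:ℝ) < (e.1.2 : ℝ) := by exact_mod_cast hb
    positivity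
  exact (mul_eq_zero.mp happ).resolve_right hc

lemma hmVertex_injective (n : ℕ) : Function.Injective (hmVertex n) := by
  intro x y hxy
  have h1 := psi_vertex (n := n) x x
  have h2 := psi_vertex (n := n) x y
  rw [← hxy] at h2
  rw [h1] at h2
  have hmem : (x.1.1, x.1.2) ∈ idx n := by rw [Prod.mk.eta]; exact x.2
  obtain ⟨ha, hb, -⟩ := mem_idx.mp hmem
  have hc : (1 / (2 * (x.1.1:ℝ) * (x.1.2:ℝ))) ≠ 0 := by
    have ha' : (0:ℝ) < (x.1.1 : ℝ) := by exact_mod_cast ha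
    have hb' : (0:ℝ) < (x.1.2 : ℝ) := by exact_mod_cast hb
    positivity
  rw [if_pos rfl] at h2
  by_contra hne
  rw [if_neg (fun h => hne h.symm)] at h2
  exact hc h2

lemma HM_eq_convexHull (n : ℕ) : HM n = convexHull ℝ (Set.range (hmVertex n)) := by
  apply Set.Subset.antisymm
  · intro C hC
    rw [← reconstruct hC]
    exact (convex_convexHull ℝ _).sum_mem
      (fun ab _ => wt_nonneg hC ab)
      (wt_sum hC)
      (fun ab _ => subset_convexHull ℝ _ ⟨ab, rfl⟩)
  · exact convexHull_min (by rintro _ ⟨ab, rfl⟩; exact hmVertex_mem_HM ab) (convex_HM n)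

lemma card_idx (n : ℕ) : (idx n).card = n * (n - 1) / 2 := by
  induction n with
  | zero =>
    have : idx 0 = ∅ := by
      ext ⟨a, b⟩; simp only [mem_idx, Finset.notMem_empty, iff_false]; omega
    simp [this]
  | succ n ih =>
    have hunion : idx (n+1) = idx n ∪ ((Icc 1 n).image fun a => (a, n+1-a)) := by
      ext ⟨a, b⟩
      simp only [mem_union, mem_idx, mem_image, mem_Icc]
      constructor
      · rintro ⟨h1, h2, h3⟩
        by_cases h : a + b ≤ n
        · exact Or.inl ⟨h1, h2, h⟩
        · refine Or.inr ⟨a, ⟨h1, by omega⟩, ?_⟩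
          rw [Prod.mk.injEq]
          omega
      · rintro (⟨h1, h2, h3⟩ | ⟨x, ⟨hx1, hx2⟩, heq⟩)
        · exact ⟨h1, h2, by omega⟩
        · rw [Prod.mk.injEq] at heq
          omega
    have hdis : Disjoint (idx n) ((Icc 1 n).image fun a => (a, n+1-a)) := by
      rw [Finset.disjoint_left]
      rintro ⟨a, b⟩ hp hq
      obtain ⟨h1, h2, h3⟩ := mem_idx.mp hp
      simp only [mem_image, mem_Icc] at hq
      obtain ⟨x, ⟨hx1, hx2⟩, heq⟩ := hq
      rw [Prod.mk.injEq] at heq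
      omega
    have hinj : Set.InjOn (fun a => (a, n+1-a)) (Icc 1 n) := by
      intro x _ y _ hxy
      rw [Prod.mk.injEq] at hxy
      exact hxy.1
    rw [hunion, Finset.card_union_of_disjoint hdis, Finset.card_image_of_injOn hinj,
      Nat.card_Icc, ih]
    rcases n with _ | m
    · norm_num
    · have h2 : (m+1+1)*(m+1+1-1) = (m+1)*(m+1-1) + 2*(m+1) := by
        simp only [Nat.add_sub_cancel]; ring
      rw [h2]
      generalize (m+1)*(m+1-1) = X
      omega

/-- The family `(1/(2ab)) • NESW (a × b)` (for `a, b ≥ 1`, `a + b ≤ n`) is affinely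
independent, and the hollow symmetric Monge polytope is its convex hull; it is a simplex
with `n(n-1)/2` vertices. -/
theorem hm_simplex (n : ℕ) (hn : 2 ≤ n) :
    AffineIndependent ℝ (hmVertex n) ∧
    HM n = convexHull ℝ (Set.range (hmVertex n)) ∧
    Function.Injective (hmVertex n) ∧
    (idx n).card = n * (n - 1) / 2 := by
  exact ⟨hmVertex_affineIndependent n, HM_eq_convexHull n, hmVertex_injective n, card_idx n⟩
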